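/- arXiv:2303.02546 — 3 statements merged into one kernel-verified Lean document; each statement's English description precedes it below -/
import Mathlib

section
/- Let u, k be vectors in ℝ³ with k ≠ 0, and let v range over all vectors with fixed norm b and fixed inner product ⟨v, k⟩ = a. Then the inner product ⟨u, v⟩ is maximized at a vector v* whose projection onto the plane orthogonal to k is a nonnegative scalar multiple of the projection of u onto that plane (assuming the projection of u onto the plane is nonzero and the constraint set is nonempty with b² > a²/‖k‖²). -/
set_option maxHeartbeats 1000000


open scoped RealInnerProductSpace

noncomputable section

/-- 3-dimensional Euclidean space. -/
abbrev V := EuclideanSpace ℝ (Fin 3)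

/-- Projection of `x` onto the plane with normal `k`. -/
def proj (k x : V) : V := x - (⟪x, k⟫ / ‖k‖ ^ 2) • k

/-- `R` is a rotation about the axis `k`: an orientation-preserving linear isometry fixing `k`. -/
def IsRotationAbout (k : V) (R : V ≃ₗᵢ[ℝ] V) : Prop :=
  R k = k ∧ LinearMap.det (R.toLinearEquiv : V →ₗ[ℝ] V) = 1

/-- The cross product on `ℝ³`. -/
def cross (x y : V) : V :=
  (EuclideanSpace.equiv (Fin 3) ℝ).symm
    (crossProduct ((EuclideanSpace.equiv (Fin 3) ℝ) x) ((EuclideanSpace.equiv (Fin 3) ℝ) y))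

/-- The rotation angle of a rotation in `SO(3)`, recovered from its trace. -/
def rotAngle (R : V ≃ₗᵢ[ℝ] V) : ℝ :=
  Real.arccos ((LinearMap.trace ℝ V (R.toLinearEquiv : V →ₗ[ℝ] V) - 1) / 2)

theorem stmt0 (u k : V) (hk : k ≠ 0) (a b : ℝ)
    (hu : proj k u ≠ 0)
    (hb : a ^ 2 / ‖k‖ ^ 2 < b ^ 2)
    (hne : {v : V | ⟪v, k⟫ = a ∧ ‖v‖ = b}.Nonempty) :
    ∃ vstar : V, ⟪vstar, k⟫ = a ∧ ‖vstar‖ = b ∧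
      (∀ v : V, ⟪v, k⟫ = a → ‖v‖ = b → ⟪u, v⟫ ≤ ⟪u, vstar⟫) ∧
      ∃ c : ℝ, 0 ≤ c ∧ proj k vstar = c • proj k u := by
  have hkn : ‖k‖ ≠ 0 := norm_ne_zero_iff.mpr hk
  have hN0 : (0:ℝ) < ‖k‖ ^ 2 := by positivity
  have hkk : ⟪k, k⟫ = ‖k‖ ^ 2 := real_inner_self_eq_norm_sq k
  set p : V := proj k u with hp
  have hpk : ⟪p, k⟫ = 0 := by
    rw [hp, proj, inner_sub_left, real_inner_smul_left, hkk]
    field_simp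
    ring
  have hkp : ⟪k, p⟫ = 0 := by rw [real_inner_comm]; exact hpk
  have hpn : (0:ℝ) < ‖p‖ := norm_pos_iff.mpr hu
  have hPn : ‖p‖ ≠ 0 := ne_of_gt hpn
  have hu' : u = p + (⟪u, k⟫ / ‖k‖ ^ 2) • k := by rw [hp, proj]; abel
  have hup : ⟪u, p⟫ = ‖p‖ ^ 2 := by
    conv_lhs => rw [hu']
    rw [inner_add_left, real_inner_smul_left, hkp, real_inner_self_eq_norm_sq p]
    ring
  set r : ℝ := Real.sqrt (b ^ 2 - a ^ 2 / ‖k‖ ^ 2) with hr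
  have hr0 : 0 ≤ r := Real.sqrt_nonneg _
  have hr2 : r ^ 2 = b ^ 2 - a ^ 2 / ‖k‖ ^ 2 := Real.sq_sqrt (by linarith)
  have hb0 : 0 ≤ b := by
    obtain ⟨v, _, hv⟩ := hne
    rw [← hv]; exact norm_nonneg v
  set vs : V := (a / ‖k‖ ^ 2) • k + (r / ‖p‖) • p with hvs
  have hvsk : ⟪vs, k⟫ = a := by
    rw [hvs, inner_add_left, real_inner_smul_left, real_inner_smul_left, hkk, hpk]
    field_simp
    ring
  have hvsn : ‖vs‖ = b := by
    have h2 : ‖vs‖ ^ 2 = b ^ 2 := by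
      rw [← real_inner_self_eq_norm_sq, hvs]
      simp only [inner_add_left, inner_add_right, real_inner_smul_left,
        real_inner_smul_right, hkk, hpk, hkp, real_inner_self_eq_norm_sq p]
      have hr2' : r ^ 2 * ‖k‖ ^ 2 = b ^ 2 * ‖k‖ ^ 2 - a ^ 2 := by
        rw [hr2]; field_simp
      field_simp
      linear_combination ‖p‖ * hr2'
    nlinarith [norm_nonneg vs]
  have hvs_proj : proj k vs = (r / ‖p‖) • p := by
    rw [proj, hvsk, hvs]; abel
  have huvs : ⟪u, vs⟫ = (a / ‖k‖ ^ 2) * ⟪u, k⟫ + r * ‖p‖ := by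
    rw [hvs, inner_add_right, real_inner_smul_right, real_inner_smul_right, hup]
    field_simp
  refine ⟨vs, hvsk, hvsn, ?_, r / ‖p‖, by positivity, hvs_proj⟩
  intro v hvk hvn
  have hkv : ⟪k, v⟫ = a := by rw [real_inner_comm]; exact hvk
  set w : V := v - (a / ‖k‖ ^ 2) • k with hw
  have hwk : ⟪w, k⟫ = 0 := by
    rw [hw, inner_sub_left, real_inner_smul_left, hkk, hvk]
    field_simp
    ring
  have hkw : ⟪k, w⟫ = 0 := by rw [real_inner_comm]; exact hwk
  have hwn : ‖w‖ ^ 2 = r ^ 2 := by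
    rw [hr2, ← real_inner_self_eq_norm_sq, hw]
    simp only [inner_sub_left, inner_sub_right, real_inner_smul_left,
      real_inner_smul_right, hkk, hvk, hkv, real_inner_self_eq_norm_sq v, hvn]
    field_simp
    ring
  have huw : ⟪u, w⟫ = ⟪p, w⟫ := by
    conv_lhs => rw [hu']
    rw [inner_add_left, real_inner_smul_left, hkw]
    ring
  have hcs : ⟪p, w⟫ ≤ ‖p‖ * ‖w‖ := real_inner_le_norm p w
  have hwnr : ‖w‖ = r := by nlinarith [norm_nonneg w]
  have hv : ⟪u, v⟫ = (a / ‖k‖ ^ 2) * ⟪u, k⟫ + ⟪u, w⟫ := by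
    have hveq : v = (a / ‖k‖ ^ 2) • k + w := by rw [hw]; abel
    rw [hveq, inner_add_right, real_inner_smul_right]
  rw [hv, huvs]
  have : ⟪u, w⟫ ≤ r * ‖p‖ := by rw [huw]; rw [hwnr] at hcs; linarith
  linarith
end
end

section
/- Let k be a unit vector in ℝ³ and let u, v ∈ ℝ³ be such that their projections P(u), P(v) onto the plane orthogonal to k are both nonzero. Then there exists a rotation R about the axis k such that P(R v) is a positive scalar multiple of P(u), and for this R the inner product ⟨R v, u⟩ is maximal among all rotations about k; moreover ⟨R v, u⟩ = ⟨v,k⟩⟨u,k⟩ + ‖P(v)‖·‖P(u)‖. -/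
open scoped RealInnerProductSpace

noncomputable section

/-! ### Auxiliary lemmas -/

lemma V_inner (x y : V) : ⟪x, y⟫ = ∑ i, x i * y i := by
  simp [PiLp.inner_apply, RCLike.inner_apply]
  exact Finset.sum_congr rfl fun _ _ => mul_comm _ _

lemma cross_apply' (x y : V) :
    cross x y = ![x 1 * y 2 - x 2 * y 1, x 2 * y 0 - x 0 * y 2, x 0 * y 1 - x 1 * y 0] := rfl

lemma inner_cross_left (x y : V) : ⟪x, cross x y⟫ = 0 := by
  simp [V_inner, cross_apply', Fin.sum_univ_three]; ring

lemma inner_cross_right (x y : V) : ⟪y, cross x y⟫ = 0 := by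
  simp [V_inner, cross_apply', Fin.sum_univ_three]; ring

lemma inner_cross_cross (a b c d : V) :
    ⟪cross a b, cross c d⟫ = ⟪a, c⟫ * ⟪b, d⟫ - ⟪a, d⟫ * ⟪b, c⟫ := by
  simp [V_inner, cross_apply', Fin.sum_univ_three]; ring

lemma inner_cross_swap (a x y : V) : ⟪a, cross x y⟫ = -⟪y, cross x a⟫ := by
  simp [V_inner, cross_apply', Fin.sum_univ_three]; ring

/-- The family `![a, b, a × b]`. -/
def tripleFam (a b : V) : Fin 3 → V := ![a, b, cross a b]

lemma tripleFam_orthonormal {a b : V} (ha : ‖a‖ = 1) (hb : ‖b‖ = 1) (hab : ⟪a, b⟫ = 0) :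
    Orthonormal ℝ (tripleFam a b) := by
  have haa : ⟪a, a⟫ = 1 := by rw [real_inner_self_eq_norm_sq, ha]; norm_num
  have hbb : ⟪b, b⟫ = 1 := by rw [real_inner_self_eq_norm_sq, hb]; norm_num
  have hba : ⟪b, a⟫ = 0 := by rw [real_inner_comm]; exact hab
  have h1 : ⟪cross a b, a⟫ = 0 := by rw [real_inner_comm]; exact inner_cross_left a b
  have h2 : ⟪cross a b, b⟫ = 0 := by rw [real_inner_comm]; exact inner_cross_right a b
  have h3 : ⟪cross a b, cross a b⟫ = 1 := by
    rw [inner_cross_cross, haa, hbb, hab]; ring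
  rw [orthonormal_iff_ite]
  intro i j
  fin_cases i <;> fin_cases j <;>
    simp only [tripleFam, Matrix.cons_val_zero, Matrix.cons_val_one, Matrix.head_cons,
      Matrix.cons_val_two, Matrix.tail_cons] <;>
    first
      | simpa [Fin.ext_iff] using haa
      | simpa [Fin.ext_iff] using hbb
      | simpa [Fin.ext_iff] using hab
      | simpa [Fin.ext_iff] using hba
      | simpa [Fin.ext_iff] using h1
      | simpa [Fin.ext_iff] using h2
      | simpa [Fin.ext_iff] using h3
      | simpa [Fin.ext_iff] using inner_cross_left a b
      | simpa [Fin.ext_iff] using inner_cross_right a b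

/-- An orthonormal basis `![a, b, a × b]`. -/
def tripleBasis {a b : V} (h : Orthonormal ℝ (tripleFam a b)) : Module.Basis (Fin 3) ℝ V :=
  basisOfOrthonormalOfCardEqFinrank h (by simp)

lemma coe_tripleBasis {a b : V} (h : Orthonormal ℝ (tripleFam a b)) :
    ⇑(tripleBasis h) = tripleFam a b :=
  coe_basisOfOrthonormalOfCardEqFinrank _ _

/-- Key construction: a rotation about `a` sending `b` to `c`. -/
lemma rotAux {a b c : V} (ha : ‖a‖ = 1) (hb : ‖b‖ = 1) (hc : ‖c‖ = 1)
    (hab : ⟪a, b⟫ = 0) (hac : ⟪a, c⟫ = 0) :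
    ∃ R : V ≃ₗᵢ[ℝ] V, R a = a ∧ R b = c ∧
      LinearMap.det (R.toLinearEquiv : V →ₗ[ℝ] V) = 1 := by
  have hB := tripleFam_orthonormal ha hb hab
  have hC := tripleFam_orthonormal ha hc hac
  have hBo : Orthonormal ℝ ⇑(tripleBasis hB) := by rw [coe_tripleBasis]; exact hB
  have hCo : Orthonormal ℝ ⇑(tripleBasis hC) := by rw [coe_tripleBasis]; exact hC
  refine ⟨hBo.equiv hCo (Equiv.refl _), ?_, ?_, ?_⟩
  · have h := hBo.equiv_apply hCo (Equiv.refl _) 0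
    simpa [coe_tripleBasis, tripleFam] using h
  · have h := hBo.equiv_apply hCo (Equiv.refl _) 1
    simpa [coe_tripleBasis, tripleFam] using h
  · -- determinant
    set B := (tripleBasis hB).toOrthonormalBasis hBo with hBdef
    have hBb : (tripleBasis hB) = B.toBasis := (Module.Basis.toBasis_toOrthonormalBasis _ _).symm
    have hBi : ∀ i, B i = tripleFam a b i := by
      intro i
      rw [hBdef, Module.Basis.coe_toOrthonormalBasis, coe_tripleBasis]
    have hrepr : ∀ (x : V) (i : Fin 3), (tripleBasis hB).repr x i = ⟪tripleFam a b i, x⟫ := by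
      intro x i
      rw [hBb, B.coe_toBasis_repr_apply, B.repr_apply_apply, hBi]
    have hdet1 : LinearMap.det
        (((hBo.equiv hCo (Equiv.refl (Fin 3))).toLinearEquiv : V ≃ₗ[ℝ] V) : V →ₗ[ℝ] V)
        = (tripleBasis hB).det ⇑(tripleBasis hC) := by
      rw [Orthonormal.equiv_toLinearEquiv]
      have h := Module.Basis.det_comp_basis (tripleBasis hC) (tripleBasis hB) (LinearMap.id (R := ℝ) (M := V))
      simpa using h.symm
    rw [hdet1, Module.Basis.det_apply, Matrix.det_fin_three]
    simp only [Module.Basis.toMatrix_apply, hrepr, coe_tripleBasis]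
    have h34 : ∀ i, (tripleFam a c) i = (![a, c, cross a c]) i := fun i => rfl
    have e00 : ⟪tripleFam a b 0, tripleFam a c 0⟫ = 1 := by
      simp only [tripleFam, Matrix.cons_val_zero]
      rw [real_inner_self_eq_norm_sq, ha]; norm_num
    have e01 : ⟪tripleFam a b 0, tripleFam a c 1⟫ = 0 := by
      simpa [tripleFam] using hac
    have e02 : ⟪tripleFam a b 0, tripleFam a c 2⟫ = 0 := by
      simpa [tripleFam] using inner_cross_left a c
    have e10 : ⟪tripleFam a b 1, tripleFam a c 0⟫ = 0 := by
      simp only [tripleFam, Matrix.cons_val_one, Matrix.head_cons, Matrix.cons_val_zero]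
      rw [real_inner_comm]; exact hab
    have e20 : ⟪tripleFam a b 2, tripleFam a c 0⟫ = 0 := by
      simp only [tripleFam, Matrix.cons_val_two, Matrix.tail_cons, Matrix.head_cons,
        Matrix.cons_val_zero]
      rw [real_inner_comm]; exact inner_cross_left a b
    have e11 : ⟪tripleFam a b 1, tripleFam a c 1⟫ = ⟪b, c⟫ := by simp [tripleFam]
    have e12 : ⟪tripleFam a b 1, tripleFam a c 2⟫ = -⟪c, cross a b⟫ := by
      simp only [tripleFam, Matrix.cons_val_one, Matrix.head_cons, Matrix.cons_val_two,
        Matrix.tail_cons]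
      exact inner_cross_swap b a c
    have e21 : ⟪tripleFam a b 2, tripleFam a c 1⟫ = ⟪c, cross a b⟫ := by
      simp only [tripleFam, Matrix.cons_val_two, Matrix.tail_cons, Matrix.head_cons,
        Matrix.cons_val_one, Matrix.cons_val_zero]
      rw [real_inner_comm]
    have e22 : ⟪tripleFam a b 2, tripleFam a c 2⟫ = ⟪b, c⟫ := by
      simp only [tripleFam, Matrix.cons_val_two, Matrix.tail_cons, Matrix.head_cons]
      rw [inner_cross_cross, hac, real_inner_self_eq_norm_sq, ha]
      ring
    rw [e00, e01, e02, e10, e20, e11, e12, e21, e22]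
    -- Parseval for `c` in the basis `B`
    have hpars := B.sum_inner_mul_inner c c
    rw [Fin.sum_univ_three, hBi 0, hBi 1, hBi 2] at hpars
    have hca : ⟪c, tripleFam a b 0⟫ = 0 := by
      simp only [tripleFam, Matrix.cons_val_zero]; rw [real_inner_comm]; exact hac
    have hcc : ⟪c, c⟫ = 1 := by rw [real_inner_self_eq_norm_sq, hc]; norm_num
    rw [hca, hcc] at hpars
    have h1 : ⟪tripleFam a b 1, c⟫ = ⟪b, c⟫ := by simp [tripleFam]
    have h1' : ⟪c, tripleFam a b 1⟫ = ⟪b, c⟫ := by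
      simp only [tripleFam, Matrix.cons_val_one, Matrix.head_cons, Matrix.cons_val_zero]; rw [real_inner_comm]
    have h2 : ⟪tripleFam a b 2, c⟫ = ⟪c, cross a b⟫ := by
      simp only [tripleFam, Matrix.cons_val_two, Matrix.tail_cons, Matrix.head_cons]
      rw [real_inner_comm]
    have h2' : ⟪c, tripleFam a b 2⟫ = ⟪c, cross a b⟫ := by
      simp only [tripleFam, Matrix.cons_val_two, Matrix.tail_cons, Matrix.head_cons]
    rw [h1, h1', h2, h2'] at hpars
    nlinarith [hpars]

lemma proj_eq (k x : V) (hk : ‖k‖ = 1) : proj k x = x - ⟪x, k⟫ • k := by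
  simp only [proj, hk]; norm_num

theorem stmt4 (k : V) (hk : ‖k‖ = 1) (u v : V)
    (hu : proj k u ≠ 0) (hv : proj k v ≠ 0) :
    ∃ R : V ≃ₗᵢ[ℝ] V, IsRotationAbout k R ∧
      (∃ c : ℝ, 0 < c ∧ proj k (R v) = c • proj k u) ∧
      (∀ S : V ≃ₗᵢ[ℝ] V, IsRotationAbout k S → ⟪S v, u⟫ ≤ ⟪R v, u⟫) ∧
      ⟪R v, u⟫ = ⟪v, k⟫ * ⟪u, k⟫ + ‖proj k v‖ * ‖proj k u‖ := by
  have hk2 : ⟪k, k⟫ = 1 := by rw [real_inner_self_eq_norm_sq, hk]; norm_num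
  set p := proj k v with hpdef
  set q := proj k u with hqdef
  have hpv : p = v - ⟪v, k⟫ • k := hpdef.trans (proj_eq k v hk)
  have hqu : q = u - ⟪u, k⟫ • k := hqdef.trans (proj_eq k u hk)
  have hpk : ⟪p, k⟫ = 0 := by rw [hpv, inner_sub_left, real_inner_smul_left, hk2]; ring
  have hqk : ⟪q, k⟫ = 0 := by rw [hqu, inner_sub_left, real_inner_smul_left, hk2]; ring
  have hpn : (0:ℝ) < ‖p‖ := norm_pos_iff.mpr hv
  have hqn : (0:ℝ) < ‖q‖ := norm_pos_iff.mpr hu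
  set e1 : V := ‖p‖⁻¹ • p with he1def
  set f1 : V := ‖q‖⁻¹ • q with hf1def
  have he1 : ‖e1‖ = 1 := by
    rw [he1def, norm_smul, Real.norm_eq_abs, abs_inv, abs_norm, inv_mul_cancel₀ hpn.ne']
  have hf1 : ‖f1‖ = 1 := by
    rw [hf1def, norm_smul, Real.norm_eq_abs, abs_inv, abs_norm, inv_mul_cancel₀ hqn.ne']
  have hke1 : ⟪k, e1⟫ = 0 := by
    rw [he1def, real_inner_smul_right, real_inner_comm, hpk, mul_zero]
  have hkf1 : ⟪k, f1⟫ = 0 := by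
    rw [hf1def, real_inner_smul_right, real_inner_comm, hqk, mul_zero]
  have he1k : ⟪e1, k⟫ = 0 := by rw [real_inner_comm]; exact hke1
  have hf1k : ⟪f1, k⟫ = 0 := by rw [real_inner_comm]; exact hkf1
  obtain ⟨R, hRk, hRe1, hRdet⟩ := rotAux hk he1 hf1 hke1 hkf1
  have hv2 : v = ⟪v, k⟫ • k + ‖p‖ • e1 := by
    rw [he1def, smul_smul, mul_inv_cancel₀ hpn.ne', one_smul, hpv]; abel
  have hu2 : u = q + ⟪u, k⟫ • k := by rw [hqu]; abel
  have hRv : R v = ⟪v, k⟫ • k + ‖p‖ • f1 := by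
    conv_lhs => rw [hv2]
    rw [map_add, map_smul, map_smul, hRk, hRe1]
  have hqu' : ⟪q, u⟫ = ‖q‖ ^ 2 := by
    calc ⟪q, u⟫ = ⟪q, q + ⟪u, k⟫ • k⟫ := by rw [← hu2]
    _ = ⟪q, q⟫ + ⟪u, k⟫ * ⟪q, k⟫ := by
        rw [inner_add_right, real_inner_smul_right]
    _ = ‖q‖ ^ 2 := by rw [hqk, real_inner_self_eq_norm_sq]; ring
  have hf1u : ⟪f1, u⟫ = ‖q‖ := by
    rw [hf1def, real_inner_smul_left, hqu', sq, ← mul_assoc, inv_mul_cancel₀ hqn.ne', one_mul]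
  have hvalue : ⟪R v, u⟫ = ⟪v, k⟫ * ⟪u, k⟫ + ‖p‖ * ‖q‖ := by
    rw [hRv, inner_add_left, real_inner_smul_left, real_inner_smul_left, hf1u,
      real_inner_comm k u]
  refine ⟨R, ⟨hRk, hRdet⟩, ?_, ?_, hvalue⟩
  · refine ⟨‖p‖ / ‖q‖, div_pos hpn hqn, ?_⟩
    have hRvk : ⟪R v, k⟫ = ⟪v, k⟫ := by
      rw [hRv, inner_add_left, real_inner_smul_left, real_inner_smul_left, hk2, hf1k]; ring
    rw [proj_eq k (R v) hk, hRvk]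
    conv_lhs => rw [hRv]
    rw [hf1def, smul_smul, div_eq_mul_inv]
    abel
  · rintro S ⟨hSk, -⟩
    have hSv : S v = ⟪v, k⟫ • k + ‖p‖ • S e1 := by
      conv_lhs => rw [hv2]
      rw [map_add, map_smul, map_smul, hSk]
    have hSe1k : ⟪S e1, k⟫ = 0 := by
      calc ⟪S e1, k⟫ = ⟪S e1, S k⟫ := by rw [hSk]
      _ = ⟪e1, k⟫ := S.inner_map_map e1 k
      _ = 0 := he1k
    have hSe1u : ⟪S e1, u⟫ ≤ ‖q‖ := by
      calc ⟪S e1, u⟫ = ⟪S e1, q + ⟪u, k⟫ • k⟫ := by rw [← hu2]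
      _ = ⟪S e1, q⟫ + ⟪u, k⟫ * ⟪S e1, k⟫ := by
          rw [inner_add_right, real_inner_smul_right]
      _ = ⟪S e1, q⟫ := by rw [hSe1k]; ring
      _ ≤ ‖S e1‖ * ‖q‖ := real_inner_le_norm _ _
      _ = ‖q‖ := by rw [S.norm_map, he1, one_mul]
    calc ⟪S v, u⟫ = ⟪v, k⟫ * ⟪u, k⟫ + ‖p‖ * ⟪S e1, u⟫ := by
          rw [hSv, inner_add_left, real_inner_smul_left, real_inner_smul_left,
            real_inner_comm k u]
    _ ≤ ⟪v, k⟫ * ⟪u, k⟫ + ‖p‖ * ‖q‖ := by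
          nlinarith [mul_le_mul_of_nonneg_left hSe1u (norm_nonneg p)]
    _ = ⟪R v, u⟫ := hvalue.symm
end
end

section
/- For u, v ∈ ℝ³ with v constrained to rotate about a unit vector k, writing φ for the angle between P(v) and P(u) in the plane orthogonal to k (both projections nonzero), the inner product satisfies ⟨R_φ v, u⟩ = ⟨v,k⟩⟨u,k⟩ + ‖P(v)‖‖P(u)‖ cos φ, where R_φ is the rotation about k by the angle that makes the projections form angle φ. In particular ⟨R_φ v, u⟩ is maximized at φ = 0 and minimized at φ = π. -/
open scoped RealInnerProductSpace

noncomputable section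

/-! ### Auxiliary lemmas -/

lemma inner3 (x y : V) : ⟪x, y⟫ = x 0 * y 0 + x 1 * y 1 + x 2 * y 2 := by
  simp [PiLp.inner_apply, RCLike.inner_apply, Fin.sum_univ_three]
  ring

lemma cross0 (x y : V) : cross x y 0 = x 1 * y 2 - x 2 * y 1 := by simp [cross, crossProduct]
lemma cross1 (x y : V) : cross x y 1 = x 2 * y 0 - x 0 * y 2 := by simp [cross, crossProduct]
lemma cross2 (x y : V) : cross x y 2 = x 0 * y 1 - x 1 * y 0 := by simp [cross, crossProduct]

lemma cross_add (k x y : V) : cross k (x + y) = cross k x + cross k y := by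
  ext i; fin_cases i <;> simp [cross0, cross1, cross2] <;> ring

lemma cross_smul (k : V) (r : ℝ) (x : V) : cross k (r • x) = r • cross k x := by
  ext i; fin_cases i <;> simp [cross0, cross1, cross2] <;> ring

lemma crossSelf (k : V) : cross k k = 0 := by
  ext i; fin_cases i <;> simp [cross0, cross1, cross2] <;> ring

/-- The Rodrigues rotation as a linear map. -/
def rod (k : V) (c s : ℝ) : V →ₗ[ℝ] V where
  toFun x := c • x + s • cross k x + ((1 - c) * ⟪k, x⟫) • k
  map_add' x y := by
    show c • (x+y) + s • cross k (x+y) + ((1 - c) * ⟪k, x+y⟫) • k = _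
    rw [cross_add, inner_add_right]
    module
  map_smul' r x := by
    show c • (r • x) + s • cross k (r • x) + ((1 - c) * ⟪k, r • x⟫) • k = _
    rw [cross_smul, inner_smul_right]
    simp only [RingHom.id_apply]
    module

lemma rod_apply (k : V) (c s : ℝ) (x : V) :
    rod k c s x = c • x + s • cross k x + ((1 - c) * ⟪k, x⟫) • k := rfl

lemma rod_inner (k : V) (c s : ℝ) (hk : ⟪k,k⟫ = 1) (hcs : c^2 + s^2 = 1) (x y : V) :
    ⟪rod k c s x, rod k c s y⟫ = ⟪x, y⟫ := by
  simp only [rod_apply] at *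
  simp only [inner3, cross0, cross1, cross2, PiLp.add_apply, PiLp.smul_apply, smul_eq_mul] at *
  linear_combination (s^2*(x 0*y 0 + x 1*y 1 + x 2*y 2) +
      (1-c)^2*(k 0*x 0+k 1*x 1+k 2*x 2)*(k 0*y 0+k 1*y 1+k 2*y 2)) * hk +
    ((x 0*y 0+x 1*y 1+x 2*y 2) - (k 0*x 0+k 1*x 1+k 2*x 2)*(k 0*y 0+k 1*y 1+k 2*y 2)) * hcs

set_option maxHeartbeats 1000000 in
lemma rod_det (k : V) (c s : ℝ) (hk : ⟪k,k⟫ = 1) (hcs : c^2 + s^2 = 1) :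
    LinearMap.det (rod k c s) = 1 := by
  rw [← LinearMap.det_toMatrix (EuclideanSpace.basisFun (Fin 3) ℝ).toBasis]
  rw [Matrix.det_fin_three]
  simp only [LinearMap.toMatrix_apply, OrthonormalBasis.coe_toBasis,
    OrthonormalBasis.coe_toBasis_repr_apply, EuclideanSpace.basisFun_repr,
    EuclideanSpace.basisFun_apply, rod_apply]
  simp only [inner3, cross0, cross1, cross2, PiLp.add_apply, PiLp.smul_apply, smul_eq_mul,
    EuclideanSpace.single_apply]
  simp only [inner3] at hk
  set_option maxRecDepth 4000 in norm_num [Fin.ext_iff]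
  linear_combination hcs + (s^2 + (1-c)*(c^2+s^2) + (1-c)*s^2*((k 0*k 0+k 1*k 1+k 2*k 2)-1)) * hk

/-- The Rodrigues rotation as a linear isometry equivalence. -/
def rodIso (k : V) (c s : ℝ) (hk : ⟪k,k⟫ = 1) (hcs : c^2 + s^2 = 1) : V ≃ₗᵢ[ℝ] V :=
  ((rod k c s).isometryOfInner (rod_inner k c s hk hcs)).toLinearIsometryEquiv rfl

lemma rodIso_apply (k : V) (c s : ℝ) (hk : ⟪k,k⟫ = 1) (hcs : c^2 + s^2 = 1) (x : V) :
    rodIso k c s hk hcs x = rod k c s x := rfl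

lemma rodIso_isRotation (k : V) (c s : ℝ) (hk : ⟪k,k⟫ = 1) (hcs : c^2 + s^2 = 1) :
    IsRotationAbout k (rodIso k c s hk hcs) := by
  constructor
  · rw [rodIso_apply, rod_apply, crossSelf, hk]
    module
  · have : ((rodIso k c s hk hcs).toLinearEquiv : V →ₗ[ℝ] V) = rod k c s :=
      LinearMap.ext fun x => rfl
    rw [this]
    exact rod_det k c s hk hcs

lemma split (k : V) (hk : ‖k‖ = 1) (x y : V) :
    ⟪x, y⟫ = ⟪proj k x, proj k y⟫ + ⟪x, k⟫ * ⟪y, k⟫ := by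
  have hkk : ⟪k, k⟫ = (1:ℝ) := by
    rw [real_inner_self_eq_norm_sq, hk]; norm_num
  rw [proj_eq k x hk, proj_eq k y hk]
  rw [inner_sub_left, inner_sub_right, inner_sub_right, real_inner_smul_left,
    real_inner_smul_left, real_inner_smul_right, real_inner_smul_right, hkk,
    real_inner_comm k y]
  ring

lemma proj_rot (k : V) (hk : ‖k‖ = 1) (R : V ≃ₗᵢ[ℝ] V) (hRk : R k = k) (v : V) :
    proj k (R v) = R (proj k v) := by
  have h1 : ⟪R v, k⟫ = ⟪v, k⟫ := by
    conv_lhs => rw [← hRk]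
    exact R.inner_map_map v k
  rw [proj_eq k _ hk, proj_eq k v hk, h1, map_sub, map_smul, hRk]

/-- Main formula for any rotation about k. -/
lemma main_formula (k : V) (hk : ‖k‖ = 1) (u v : V)
    (hu : proj k u ≠ 0) (hv : proj k v ≠ 0)
    (R : V ≃ₗᵢ[ℝ] V) (hR : IsRotationAbout k R) :
    ⟪R v, u⟫ = ⟪v, k⟫ * ⟪u, k⟫ +
      ‖proj k v‖ * ‖proj k u‖ *
        Real.cos (InnerProductGeometry.angle (proj k (R v)) (proj k u)) := by
  have hproj : proj k (R v) = R (proj k v) := proj_rot k hk R hR.1 v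
  have hnorm : ‖proj k (R v)‖ = ‖proj k v‖ := by rw [hproj]; exact R.norm_map _
  have h1 : ⟪R v, k⟫ = ⟪v, k⟫ := by
    conv_lhs => rw [← hR.1]
    exact R.inner_map_map v k
  have h2 := split k hk (R v) u
  rw [h1] at h2
  rw [h2]
  have h3 : ‖proj k v‖ * ‖proj k u‖ *
      Real.cos (InnerProductGeometry.angle (proj k (R v)) (proj k u)) =
      ⟪proj k (R v), proj k u⟫ := by
    rw [InnerProductGeometry.cos_angle, hnorm]
    have hnv : ‖proj k v‖ ≠ 0 := norm_ne_zero_iff.mpr hv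
    have hnu : ‖proj k u‖ ≠ 0 := norm_ne_zero_iff.mpr hu
    field_simp
  rw [h3]
  ring

/-- Gram determinant identity (pure algebra). -/
lemma gram3 (e k f : V) :
    ⟪e, cross k f⟫^2 = ⟪e,e⟫*(⟪k,k⟫*⟪f,f⟫ - ⟪k,f⟫^2)
      - ⟪k,e⟫*(⟪k,e⟫*⟪f,f⟫ - ⟪k,f⟫*⟪e,f⟫)
      + ⟪e,f⟫*(⟪k,e⟫*⟪k,f⟫ - ⟪k,k⟫*⟪e,f⟫) := by
  simp only [inner3, cross0, cross1, cross2]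
  ring

lemma lagrange (k f : V) : ⟪cross k f, cross k f⟫ = ⟪k,k⟫*⟪f,f⟫ - ⟪k,f⟫^2 := by
  simp only [inner3, cross0, cross1, cross2]; ring

lemma inner_cross_left_s12 (k f : V) : ⟪k, cross k f⟫ = 0 := by
  simp only [inner3, cross0, cross1, cross2]; ring

lemma inner_cross_right_s12 (k f : V) : ⟪f, cross k f⟫ = 0 := by
  simp only [inner3, cross0, cross1, cross2]; ring

/-- Existence of a rotation about `k` sending `proj k v` to `‖proj k v‖ • e`,
for any unit vector `e` orthogonal to `k`. -/
lemma exists_rot (k : V) (hk : ‖k‖ = 1) (v : V) (hv : proj k v ≠ 0)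
    (e : V) (he : ‖e‖ = 1) (hek : ⟪k, e⟫ = 0) :
    ∃ R0 : V ≃ₗᵢ[ℝ] V, IsRotationAbout k R0 ∧ R0 (proj k v) = ‖proj k v‖ • e := by
  have hkk : ⟪k, k⟫ = (1:ℝ) := by
    rw [real_inner_self_eq_norm_sq, hk]; norm_num
  obtain ⟨pv, hpv⟩ : ∃ pv, pv = proj k v := ⟨_, rfl⟩
  have hv' : pv ≠ 0 := hpv ▸ hv
  have hnv : ‖pv‖ ≠ 0 := norm_ne_zero_iff.mpr hv'
  obtain ⟨f, hf⟩ : ∃ f, f = ‖pv‖⁻¹ • pv := ⟨_, rfl⟩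
  have hff : ⟪f, f⟫ = (1:ℝ) := by
    rw [real_inner_self_eq_norm_sq, hf, norm_smul]
    simp [abs_of_nonneg (inv_nonneg.mpr (norm_nonneg pv)), hnv]
  have hkpv : ⟪k, pv⟫ = 0 := by
    rw [real_inner_comm, hpv, proj_eq k v hk, inner_sub_left, real_inner_smul_left, hkk]
    ring
  have hkf : ⟪k, f⟫ = 0 := by rw [hf, real_inner_smul_right, hkpv]; ring
  have hee : ⟪e, e⟫ = (1:ℝ) := by rw [real_inner_self_eq_norm_sq, he]; norm_num
  obtain ⟨g, hg⟩ : ∃ g, g = cross k f := ⟨_, rfl⟩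
  obtain ⟨c, hc⟩ : ∃ c : ℝ, c = ⟪e, f⟫ := ⟨_, rfl⟩
  obtain ⟨s, hs⟩ : ∃ s : ℝ, s = ⟪e, g⟫ := ⟨_, rfl⟩
  have hcs : c ^ 2 + s ^ 2 = 1 := by
    have h := gram3 e k f
    rw [← hg, ← hs, ← hc, hee, hkk, hff, hkf, hek] at h
    nlinarith [h]
  have hgg : ⟪g, g⟫ = (1:ℝ) := by rw [hg, lagrange, hkk, hff, hkf]; ring
  have hfg : ⟪f, g⟫ = 0 := by rw [hg]; exact inner_cross_right_s12 k f
  have hgf : ⟪g, f⟫ = 0 := by rw [real_inner_comm]; exact hfg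
  have hfe : ⟪f, e⟫ = c := by rw [real_inner_comm]; exact hc.symm
  have hge : ⟪g, e⟫ = s := by rw [real_inner_comm]; exact hs.symm
  have hef : ⟪e, f⟫ = c := hc.symm
  have heg : ⟪e, g⟫ = s := hs.symm
  have hrodf : rod k c s f = e := by
    have hw : rod k c s f = c • f + s • g := by
      rw [rod_apply, hkf, hg]
      module
    have hzero : ⟪c • f + s • g - e, c • f + s • g - e⟫ = (0:ℝ) := by
      simp only [inner_sub_left, inner_sub_right, inner_add_left, inner_add_right,
        real_inner_smul_left, real_inner_smul_right, hff, hgg, hee, hfg, hgf, hfe, hge,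
        hef, heg]
      nlinarith [hcs]
    have hz : c • f + s • g - e = 0 := inner_self_eq_zero.mp hzero
    rw [hw, ← sub_eq_zero]
    exact hz
  refine ⟨rodIso k c s hkk hcs, rodIso_isRotation k c s hkk hcs, ?_⟩
  have hpv' : proj k v = ‖pv‖ • f := by rw [hf, smul_inv_smul₀ hnv, hpv]
  rw [rodIso_apply]
  conv_lhs => rw [hpv']
  rw [map_smul, hrodf, hpv]

lemma inner_k_proj (k : V) (hk : ‖k‖ = 1) (x : V) : ⟪k, proj k x⟫ = 0 := by
  have hkk : ⟪k, k⟫ = (1:ℝ) := by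
    rw [real_inner_self_eq_norm_sq, hk]; norm_num
  rw [real_inner_comm, proj_eq k x hk, inner_sub_left, real_inner_smul_left, hkk]
  ring

theorem stmt12 (k : V) (hk : ‖k‖ = 1) (u v : V)
    (hu : proj k u ≠ 0) (hv : proj k v ≠ 0)
    (R : V ≃ₗᵢ[ℝ] V) (hR : IsRotationAbout k R) :
    (⟪R v, u⟫ = ⟪v, k⟫ * ⟪u, k⟫ +
        ‖proj k v‖ * ‖proj k u‖ *
          Real.cos (InnerProductGeometry.angle (proj k (R v)) (proj k u))) ∧
    (⟪R v, u⟫ ≤ ⟪v, k⟫ * ⟪u, k⟫ + ‖proj k v‖ * ‖proj k u‖ * Real.cos 0) ∧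
    (⟪v, k⟫ * ⟪u, k⟫ + ‖proj k v‖ * ‖proj k u‖ * Real.cos Real.pi ≤ ⟪R v, u⟫) ∧
    (∃ R0 : V ≃ₗᵢ[ℝ] V, IsRotationAbout k R0 ∧
      InnerProductGeometry.angle (proj k (R0 v)) (proj k u) = 0 ∧
      ⟪R0 v, u⟫ = ⟪v, k⟫ * ⟪u, k⟫ + ‖proj k v‖ * ‖proj k u‖) ∧
    (∃ R1 : V ≃ₗᵢ[ℝ] V, IsRotationAbout k R1 ∧
      InnerProductGeometry.angle (proj k (R1 v)) (proj k u) = Real.pi ∧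
      ⟪R1 v, u⟫ = ⟪v, k⟫ * ⟪u, k⟫ - ‖proj k v‖ * ‖proj k u‖) := by
  have hmain := main_formula k hk u v hu hv
  have part1 := hmain R hR
  have hA : (0:ℝ) ≤ ‖proj k v‖ * ‖proj k u‖ := by positivity
  have hnu0 : (0:ℝ) < ‖proj k u‖ := norm_pos_iff.mpr hu
  have hnv0 : (0:ℝ) < ‖proj k v‖ := norm_pos_iff.mpr hv
  refine ⟨part1, ?_, ?_, ?_, ?_⟩
  · rw [part1, Real.cos_zero]
    have := Real.cos_le_one (InnerProductGeometry.angle (proj k (R v)) (proj k u))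
    nlinarith
  · rw [part1, Real.cos_pi]
    have := Real.neg_one_le_cos (InnerProductGeometry.angle (proj k (R v)) (proj k u))
    nlinarith
  · -- maximizer
    obtain ⟨e, he⟩ : ∃ e : V, e = ‖proj k u‖⁻¹ • proj k u := ⟨_, rfl⟩
    have hne : ‖e‖ = 1 := by rw [he]; exact norm_smul_inv_norm hu
    have hek : ⟪k, e⟫ = 0 := by
      rw [he, real_inner_smul_right, inner_k_proj k hk u]; ring
    obtain ⟨R0, hR0, hR0v⟩ := exists_rot k hk v hv e hne hek
    have hang : InnerProductGeometry.angle (proj k (R0 v)) (proj k u) = 0 := by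
      rw [proj_rot k hk R0 hR0.1 v, hR0v, he, smul_smul,
        InnerProductGeometry.angle_smul_left_of_pos _ _
          (mul_pos hnv0 (inv_pos.mpr hnu0))]
      exact InnerProductGeometry.angle_self hu
    refine ⟨R0, hR0, hang, ?_⟩
    have h := hmain R0 hR0
    rw [hang, Real.cos_zero, mul_one] at h
    exact h
  · -- minimizer
    obtain ⟨e, he⟩ : ∃ e : V, e = -(‖proj k u‖⁻¹ • proj k u) := ⟨_, rfl⟩
    have hne : ‖e‖ = 1 := by rw [he, norm_neg]; exact norm_smul_inv_norm hu
    have hek : ⟪k, e⟫ = 0 := by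
      rw [he, inner_neg_right, real_inner_smul_right, inner_k_proj k hk u]; ring
    obtain ⟨R1, hR1, hR1v⟩ := exists_rot k hk v hv e hne hek
    have hang : InnerProductGeometry.angle (proj k (R1 v)) (proj k u) = Real.pi := by
      rw [proj_rot k hk R1 hR1.1 v, hR1v, he, smul_neg, InnerProductGeometry.angle_neg_left,
        smul_smul, InnerProductGeometry.angle_smul_left_of_pos _ _
          (mul_pos hnv0 (inv_pos.mpr hnu0)),
        InnerProductGeometry.angle_self hu, sub_zero]
    refine ⟨R1, hR1, hang, ?_⟩
    have h := hmain R1 hR1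
    rw [hang, Real.cos_pi, mul_neg_one] at h
    rw [h]
    ring
end
end
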